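/- Fix an integer k ≥ 1 and integers j_1 > j_2 > … > j_k > 0. Define φ(x_1,…,x_k) = 2^{k/2} · det( cos(π(2j_p−1)x_q/2) )_{1≤p,q≤k} and λ = 2^k · (−1)^{k(k−1)/2 + Σ_{p=1}^k (j_p+1)} / ( π^k · (2j_1−1)(2j_2−1)⋯(2j_k−1) ). Then for all real numbers 0 ≤ x_1 ≤ x_2 ≤ … ≤ x_k ≤ 1, the iterated integral ∫_{y_1=0}^{1−x_k} ∫_{y_2=1−x_k}^{1−x_{k−1}} ∫_{y_3=1−x_{k−1}}^{1−x_{k−2}} ⋯ ∫_{y_k=1−x_2}^{1−x_1} φ(y_1,…,y_k) dy_k ⋯ dy_1 equals λ · φ(x_1,…,x_k). -/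

import Mathlib

open MeasureTheory

open Equiv

/-! sign of reversal -/

theorem revPerm_succ' (n : ℕ) :
    finRotate (n+1) * (Fin.revPerm : Perm (Fin (n+1))) =
      Equiv.Perm.decomposeFin.symm (0, (Fin.revPerm : Perm (Fin n))) := by
  ext i
  refine Fin.cases ?_ (fun i => ?_) i
  · simp [Fin.rev_zero, finRotate_last]
  · simp [Fin.rev_succ, Fin.coeSucc_eq_succ]

theorem sign_revPerm' (n : ℕ) :
    Equiv.Perm.sign (Fin.revPerm : Perm (Fin n)) = (-1) ^ (n * (n-1) / 2) := by
  induction n with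
  | zero =>
    have : (Fin.revPerm : Perm (Fin 0)) = 1 := by ext i; exact absurd i.isLt (by omega)
    simp [this]
  | succ n ih =>
    have h := congrArg Equiv.Perm.sign (revPerm_succ' n)
    simp only [map_mul, sign_finRotate, Equiv.Perm.decomposeFin.symm_sign, if_pos rfl, one_mul,
      if_true, ih] at h
    have h2 : Equiv.Perm.sign (Fin.revPerm : Perm (Fin (n+1)))
        = (-1:ℤˣ)^n * (-1)^(n*(n-1)/2) := by
      rw [← h, ← mul_assoc, Nat.add_sub_cancel, ← mul_pow]; norm_num
    rw [h2, ← pow_add]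
    congr 1
    obtain ⟨m, hm⟩ := Nat.even_mul_pred_self n
    have h3 : (n+1) * (n+1-1) = n*(n-1) + 2*n := by
      cases n with
      | zero => rfl
      | succ m => simp only [Nat.add_sub_cancel]; ring
    omega

/-! integral of a product over a box -/

theorem box_integral_prod {k : ℕ} (a b : Fin k → ℝ) (f : Fin k → ℝ → ℝ) :
    (∫ y in Set.univ.pi (fun q => Set.Icc (a q) (b q)), ∏ q, f q (y q)) =
      ∏ q, ∫ t in Set.Icc (a q) (b q), f q t := by
  rw [← integral_indicator (MeasurableSet.univ_pi fun q => measurableSet_Icc)]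
  have key : ∀ y : Fin k → ℝ,
      (Set.univ.pi (fun q => Set.Icc (a q) (b q))).indicator (fun y => ∏ q, f q (y q)) y
        = ∏ q, (Set.Icc (a q) (b q)).indicator (f q) (y q) := by
    intro y
    by_cases hy : y ∈ Set.univ.pi (fun q => Set.Icc (a q) (b q))
    · rw [Set.indicator_of_mem hy]
      exact Finset.prod_congr rfl fun q _ => (Set.indicator_of_mem (hy q trivial) _).symm
    · rw [Set.indicator_of_notMem hy]
      rw [Set.mem_univ_pi] at hy
      push_neg at hy
      obtain ⟨q, hq⟩ := hy
      exact (Finset.prod_eq_zero (Finset.mem_univ q) (Set.indicator_of_notMem hq _)).symm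
  simp_rw [key]
  rw [MeasureTheory.integral_fintype_prod_volume_eq_prod
    (f := fun q => (Set.Icc (a q) (b q)).indicator (f q))]
  exact Finset.prod_congr rfl fun q _ =>
    integral_indicator measurableSet_Icc

/-! integral of a determinant over a box -/

theorem box_integral_det {k : ℕ} (a b : Fin k → ℝ) (f : Fin k → ℝ → ℝ)
    (hf : ∀ p, Continuous (f p)) :
    (∫ y in Set.univ.pi (fun q => Set.Icc (a q) (b q)),
        Matrix.det (Matrix.of fun p q : Fin k => f p (y q))) =
      Matrix.det (Matrix.of fun p q : Fin k => ∫ t in Set.Icc (a q) (b q), f p t) := by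
  have hS : Set.univ.pi (fun q : Fin k => Set.Icc (a q) (b q)) = Set.Icc a b :=
    Set.pi_univ_Icc a b
  simp_rw [Matrix.det_apply', Matrix.of_apply]
  rw [integral_finset_sum]
  · refine Finset.sum_congr rfl fun σ _ => ?_
    rw [integral_const_mul]
    congr 1
    exact box_integral_prod a b (fun q => f (σ q))
  · intro σ _
    have hc : Continuous fun y : Fin k → ℝ =>
        (Equiv.Perm.sign σ : ℝ) * ∏ q, f (σ q) (y q) :=
      continuous_const.mul (continuous_finset_prod _ fun q _ =>
        (hf (σ q)).comp (continuous_apply q))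
    rw [hS]
    exact hc.continuousOn.integrableOn_compact isCompact_Icc

/-! 1-D cosine integral -/

theorem icc_integral_cos {c a b : ℝ} (hc : c ≠ 0) (hab : a ≤ b) :
    (∫ t in Set.Icc a b, Real.cos (c * t)) = (Real.sin (c * b) - Real.sin (c * a)) / c := by
  rw [integral_Icc_eq_integral_Ioc, ← intervalIntegral.integral_of_le hab,
    intervalIntegral.integral_comp_mul_left _ hc, integral_cos, smul_eq_mul]
  field_simp

/-! the key sine identity -/

theorem sin_rev_eq (j : ℕ) (u : ℝ) :
    Real.sin (Real.pi * (2*(j:ℝ)-1)/2 * (1-u))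
      = (-1)^(j+1) * Real.cos (Real.pi * (2*(j:ℝ)-1)/2 * u) := by
  have h : Real.pi * (2*(j:ℝ)-1)/2 * (1-u)
      = (j:ℝ) * Real.pi - (Real.pi/2 + Real.pi * (2*(j:ℝ)-1)/2 * u) := by ring
  have hcos : Real.cos ((j:ℝ) * Real.pi) = (-1)^j := by
    simpa using Real.cos_nat_mul_pi_sub 0 j
  rw [h, Real.sin_sub, Real.sin_nat_mul_pi, hcos, Real.sin_add]
  simp [Real.sin_pi_div_two, Real.cos_pi_div_two, pow_succ]


/-- The eigenfunction `φ_{j_1,…,j_k}(x) = 2^{k/2} det( cos(π(2j_p−1)x_q/2) )_{p,q}`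
of the `2k`-strip transfer operator. -/
noncomputable def phiCos (k : ℕ) (jj : Fin k → ℕ) (x : Fin k → ℝ) : ℝ :=
  Real.sqrt 2 ^ k *
    Matrix.det (Matrix.of fun p q : Fin k =>
      Real.cos (Real.pi * (2 * (jj p : ℝ) - 1) * x q / 2))

/-- **Eigenfunction equation for the `2k`-strip transfer operator `S_{2k}`.**
For `j_1 > j_2 > … > j_k > 0` and `0 ≤ x_1 ≤ … ≤ x_k ≤ 1`, the iterated integral
`∫_{y_1=0}^{1−x_k} ∫_{y_2=1−x_k}^{1−x_{k−1}} ⋯ ∫_{y_k=1−x_2}^{1−x_1} φ(y) dy`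
(an integral over a box, since all the limits are constants) equals `λ · φ(x)`
with `λ = 2^k (−1)^{k(k−1)/2 + Σ_p (j_p+1)} / (π^k ∏_p (2j_p−1))`. -/
theorem transfer_eigen_2k (k : ℕ) (hk : 1 ≤ k) (jj : Fin k → ℕ)
    (hdec : ∀ p q : Fin k, p < q → jj q < jj p) (hpos : ∀ p, 0 < jj p)
    (x : Fin k → ℝ) (hmono : Monotone x) (h01 : ∀ q, 0 ≤ x q ∧ x q ≤ 1) :
    (∫ y in Set.univ.pi (fun q : Fin k =>
        Set.Icc
          (if h : (q : ℕ) = 0 then (0 : ℝ)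
            else 1 - x ⟨k - (q : ℕ), by have := q.isLt; omega⟩)
          (1 - x (Fin.rev q))),
        phiCos k jj y) =
      (2 ^ k * (-1 : ℝ) ^ (k * (k - 1) / 2 + ∑ p : Fin k, (jj p + 1)) /
          (Real.pi ^ k * ∏ p : Fin k, (2 * (jj p : ℝ) - 1))) * phiCos k jj x := by
    classical
  -- abbreviations
  set a : Fin k → ℝ := fun q =>
    if h : (q : ℕ) = 0 then (0 : ℝ)
    else 1 - x ⟨k - (q : ℕ), by have := q.isLt; omega⟩ with ha
  set b : Fin k → ℝ := fun q => 1 - x (Fin.rev q) with hb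
  set f : Fin k → ℝ → ℝ := fun p t => Real.cos (Real.pi * (2 * (jj p : ℝ) - 1) * t / 2)
    with hf
  set c : Fin k → ℝ := fun p => Real.pi * (2 * (jj p : ℝ) - 1) / 2 with hcdef
  have hj1 : ∀ p, (1:ℝ) ≤ (jj p : ℝ) := fun p => by exact_mod_cast hpos p
  have h2j : ∀ p, (0:ℝ) < 2 * (jj p : ℝ) - 1 := fun p => by have := hj1 p; linarith
  have hc : ∀ p, c p ≠ 0 := fun p => by
    have := Real.pi_pos; have := h2j p; positivity
  have hfc : ∀ p t, f p t = Real.cos (c p * t) := by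
    intro p t
    simp only [hf, hcdef]
    ring_nf
  have hfcont : ∀ p, Continuous (f p) := fun p =>
    Real.continuous_cos.comp (by continuity)
  have hab : ∀ q, a q ≤ b q := by
    intro q
    simp only [ha, hb]
    by_cases h0 : (q : ℕ) = 0
    · rw [dif_pos h0]
      have := (h01 (Fin.rev q)).2
      linarith
    · rw [dif_neg h0]
      have hle : (Fin.rev q) ≤ (⟨k - (q:ℕ), by have := q.isLt; omega⟩ : Fin k) := by
        rw [Fin.le_def, Fin.val_rev]
        exact Nat.sub_le_sub_left (Nat.le_succ _) k
      have := hmono hle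
      linarith
  -- step 1 : reduce to a determinant of integrals
  have hset : (Set.univ.pi (fun q : Fin k =>
        Set.Icc
          (if h : (q : ℕ) = 0 then (0 : ℝ)
            else 1 - x ⟨k - (q : ℕ), by have := q.isLt; omega⟩)
          (1 - x (Fin.rev q)))) = Set.univ.pi (fun q => Set.Icc (a q) (b q)) := rfl
  rw [hset]
  simp only [phiCos]
  rw [integral_const_mul, box_integral_det a b f hfcont]
  -- matrices
  set A : Matrix (Fin k) (Fin k) ℝ := Matrix.of fun p m => f p (x m) with hA
  set d : Fin k → ℝ := fun p => (-1 : ℝ)^(jj p + 1) / c p with hd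
  set B : Matrix (Fin k) (Fin k) ℝ := Matrix.of fun m q =>
    (if m = Fin.rev q then (1:ℝ) else 0)
      - (if (q:ℕ) ≠ 0 ∧ (m:ℕ) = k - (q:ℕ) then (1:ℝ) else 0) with hB
  -- the sum defining (A * B)
  have hsum : ∀ p q : Fin k, (A * B) p q
      = A p (Fin.rev q) - (if h : (q:ℕ) = 0 then 0
          else A p ⟨k - (q:ℕ), by have := q.isLt; omega⟩) := by
    intro p q
    rw [Matrix.mul_apply]
    simp only [hB, Matrix.of_apply, mul_sub, mul_ite, mul_one, mul_zero]
    rw [Finset.sum_sub_distrib]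
    congr 1
    · rw [Finset.sum_ite_eq' Finset.univ (Fin.rev q) (fun m => A p m)]
      simp
    · by_cases h0 : (q:ℕ) = 0
      · rw [dif_pos h0]
        apply Finset.sum_eq_zero
        intro m _
        rw [if_neg]
        simp [h0]
      · rw [dif_neg h0]
        have hlt : k - (q:ℕ) < k := by have := q.isLt; omega
        have hiff : ∀ m : Fin k, ((q:ℕ) ≠ 0 ∧ (m:ℕ) = k - (q:ℕ)) ↔ m = ⟨k - (q:ℕ), hlt⟩ := by
          intro m
          constructor
          · rintro ⟨-, h⟩; exact Fin.ext h
          · rintro rfl; exact ⟨h0, rfl⟩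
        simp_rw [hiff]
        rw [Finset.sum_ite_eq' Finset.univ (⟨k - (q:ℕ), hlt⟩ : Fin k) (fun m => A p m)]
        simp
  -- the matrix of integrals
  have hM : (Matrix.of fun p q : Fin k => ∫ t in Set.Icc (a q) (b q), f p t)
      = Matrix.diagonal d * (A * B) := by
    ext p q
    have hsin : ∀ u : ℝ, Real.sin (c p * (1 - u)) = (-1:ℝ)^(jj p + 1) * Real.cos (c p * u) := by
      intro u
      simp only [hcdef]
      exact sin_rev_eq (jj p) u
    have hA' : ∀ m, A p m = Real.cos (c p * x m) := fun m => by
      simp only [hA, Matrix.of_apply]; exact hfc p (x m)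
    have hint : (∫ t in Set.Icc (a q) (b q), f p t)
        = (Real.sin (c p * b q) - Real.sin (c p * a q)) / c p := by
      simp only [hfc]
      exact icc_integral_cos (hc p) (hab q)
    rw [Matrix.diagonal_mul, Matrix.of_apply, hint, hsum p q]
    by_cases h0 : (q:ℕ) = 0
    · have haq : a q = 0 := by simp [ha, h0]
      rw [dif_pos h0, haq, hb]
      rw [hsin (x (Fin.rev q)), hA' (Fin.rev q)]
      simp only [hd, mul_zero, Real.sin_zero]
      ring
    · have haq : a q = 1 - x ⟨k - (q:ℕ), by have := q.isLt; omega⟩ := by simp [ha, h0]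
      rw [dif_neg h0, haq, hb]
      rw [hsin (x (Fin.rev q)), hsin (x ⟨k - (q:ℕ), by have := q.isLt; omega⟩),
        hA' (Fin.rev q), hA' ⟨k - (q:ℕ), by have := q.isLt; omega⟩]
      simp only [hd]
      ring
  -- determinant of B
  have htri : Matrix.BlockTriangular (B.submatrix Fin.revPerm id) id := by
    intro m q hlt
    simp only [Matrix.submatrix_apply, id_eq, hB, Matrix.of_apply, Fin.revPerm_apply]
    rw [if_neg, if_neg]
    · ring
    · rintro ⟨hq0, hval⟩
      rw [Fin.val_rev] at hval
      have h1 := q.isLt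
      have h2 := m.isLt
      have h3 : (q:ℕ) < (m:ℕ) := hlt
      omega
    · intro h
      exact absurd (Fin.rev_injective h) (Fin.ne_of_gt hlt)
  have hdet1 : (B.submatrix Fin.revPerm id).det = 1 := by
    rw [Matrix.det_of_upperTriangular htri]
    apply Finset.prod_eq_one
    intro m _
    simp only [Matrix.submatrix_apply, id_eq, hB, Matrix.of_apply, Fin.revPerm_apply]
    rw [if_pos trivial, if_neg]
    · norm_num
    · rintro ⟨h0, hval⟩
      rw [Fin.val_rev] at hval
      have := m.isLt
      omega
  have hdetB : B.det = (-1:ℝ)^(k*(k-1)/2) := by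
    have hperm := Matrix.det_permute (Fin.revPerm) B
    rw [hdet1, sign_revPerm'] at hperm
    have hcast : ((((-1:ℤˣ)^(k*(k-1)/2) : ℤˣ) : ℤ) : ℝ) = (-1:ℝ)^(k*(k-1)/2) := by
      push_cast
      norm_num
    rw [hcast] at hperm
    have hsq : ((-1:ℝ)^(k*(k-1)/2)) * ((-1:ℝ)^(k*(k-1)/2)) = 1 := by
      rw [← mul_pow]
      norm_num
    calc B.det = ((-1:ℝ)^(k*(k-1)/2) * (-1:ℝ)^(k*(k-1)/2)) * B.det := by rw [hsq, one_mul]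
      _ = (-1:ℝ)^(k*(k-1)/2) * ((-1:ℝ)^(k*(k-1)/2) * B.det) := by ring
      _ = (-1:ℝ)^(k*(k-1)/2) := by rw [← hperm, mul_one]
  -- product of the diagonal entries
  have hPne : (∏ p : Fin k, (2 * (jj p : ℝ) - 1)) ≠ 0 :=
    Finset.prod_ne_zero_iff.mpr fun p _ => ne_of_gt (h2j p)
  have hprod : (∏ p, d p)
      = (-1:ℝ)^(∑ p : Fin k, (jj p + 1)) * (2^k / (Real.pi^k * ∏ p, (2*(jj p:ℝ)-1))) := by
    simp only [hd, hcdef]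
    rw [Finset.prod_div_distrib, Finset.prod_pow_eq_pow_sum]
    rw [show (∏ p : Fin k, Real.pi * (2*(jj p:ℝ)-1)/2)
        = (Real.pi^k * ∏ p, (2*(jj p:ℝ)-1)) / 2^k from by
      rw [Finset.prod_div_distrib, Finset.prod_mul_distrib, Finset.prod_const,
        Finset.prod_const, Finset.card_univ, Fintype.card_fin]]
    rw [div_div_eq_mul_div, mul_div_assoc]
  -- final assembly
  rw [hM, Matrix.det_mul, Matrix.det_mul, Matrix.det_diagonal, hdetB, hprod]
  have hdetA : Matrix.det (Matrix.of fun p q : Fin k =>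
      Real.cos (Real.pi * (2 * (jj p : ℝ) - 1) * x q / 2)) = A.det := rfl
  rw [hdetA, pow_add]
  ring
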